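/- For all real x with 0 < |x| < π/2, (2·(sin x/x) + (tan x)/x)/3 > (sin x/x)^{2/3} · (tan x/x)^{1/3} > (1/2)·[(x/sin x)^2 + x/tan x]. -/

import Mathlib

open Real

lemma ladder {f g : ℝ → ℝ} (hf : ∀ x, HasDerivAt f (g x) x) (h0 : f 0 = 0)
    (hg : ∀ x, 0 ≤ x → 0 ≤ g x) {x : ℝ} (hx : 0 ≤ x) : 0 ≤ f x := by
  have mono : MonotoneOn f (Set.Ici 0) := by
    apply monotoneOn_of_deriv_nonneg (convex_Ici 0)
    · exact fun y _ => (hf y).continuousAt.continuousWithinAt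
    · exact fun y _ => (hf y).differentiableAt.differentiableWithinAt
    · intro y hy
      rw [interior_Ici] at hy
      rw [(hf y).deriv]
      exact hg y (le_of_lt hy)
  calc (0:ℝ) = f 0 := h0.symm
  _ ≤ f x := mono Set.self_mem_Ici hx hx

lemma S3 {x : ℝ} (hx : 0 ≤ x) : 0 ≤ sin x - (x - x^3/6) := by
  refine ladder (f := fun y => sin y - (y - y^3/6)) (g := fun y => cos y - (1 - y^2/2))
    (fun y => ?_) (by norm_num) (fun y hy => ?_) hx
  · have h2 : HasDerivAt (fun y:ℝ => y - y^3/6) (1 - y^2/2) y := by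
      have := (hasDerivAt_id y).sub ((hasDerivAt_pow 3 y).div_const 6)
      exact this.congr_deriv (by push_cast; ring)
    exact (Real.hasDerivAt_sin y).sub h2
  · have := Real.one_sub_sq_div_two_le_cos (x := y); linarith

lemma C4 {x : ℝ} (hx : 0 ≤ x) : 0 ≤ (1 - x^2/2 + x^4/24) - cos x := by
  refine ladder (f := fun y => (1 - y^2/2 + y^4/24) - cos y)
    (g := fun y => (y^3/6 - y) + sin y) (fun y => ?_) (by norm_num) (fun y hy => ?_) hx
  · have h2 : HasDerivAt (fun y:ℝ => 1 - y^2/2 + y^4/24) (y^3/6 - y) y := by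
      have := (((hasDerivAt_const y (1:ℝ)).sub ((hasDerivAt_pow 2 y).div_const 2)).add
        ((hasDerivAt_pow 4 y).div_const 24))
      exact this.congr_deriv (by push_cast; ring)
    have := h2.sub (Real.hasDerivAt_cos y)
    exact this.congr_deriv (by ring)
  · have := S3 hy; linarith

lemma S5 {x : ℝ} (hx : 0 ≤ x) : 0 ≤ (x - x^3/6 + x^5/120) - sin x := by
  refine ladder (f := fun y => (y - y^3/6 + y^5/120) - sin y)
    (g := fun y => (1 - y^2/2 + y^4/24) - cos y) (fun y => ?_) (by norm_num)
    (fun y hy => C4 hy) hx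
  have h2 : HasDerivAt (fun y:ℝ => y - y^3/6 + y^5/120) (1 - y^2/2 + y^4/24) y := by
    have := (((hasDerivAt_id y).sub ((hasDerivAt_pow 3 y).div_const 6)).add
      ((hasDerivAt_pow 5 y).div_const 120))
    exact this.congr_deriv (by push_cast; ring)
  exact h2.sub (Real.hasDerivAt_sin y)

lemma C6 {x : ℝ} (hx : 0 ≤ x) : 0 ≤ cos x - (1 - x^2/2 + x^4/24 - x^6/720) := by
  refine ladder (f := fun y => cos y - (1 - y^2/2 + y^4/24 - y^6/720))
    (g := fun y => (y - y^3/6 + y^5/120) - sin y) (fun y => ?_) (by norm_num)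
    (fun y hy => S5 hy) hx
  have h2 : HasDerivAt (fun y:ℝ => 1 - y^2/2 + y^4/24 - y^6/720) (-y + y^3/6 - y^5/120) y := by
    have := ((((hasDerivAt_const y (1:ℝ)).sub ((hasDerivAt_pow 2 y).div_const 2)).add
      ((hasDerivAt_pow 4 y).div_const 24)).sub ((hasDerivAt_pow 6 y).div_const 720))
    exact this.congr_deriv (by push_cast; ring)
  have := (Real.hasDerivAt_cos y).sub h2
  exact this.congr_deriv (by ring)

lemma S7 {x : ℝ} (hx : 0 ≤ x) : 0 ≤ sin x - (x - x^3/6 + x^5/120 - x^7/5040) := by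
  refine ladder (f := fun y => sin y - (y - y^3/6 + y^5/120 - y^7/5040))
    (g := fun y => cos y - (1 - y^2/2 + y^4/24 - y^6/720)) (fun y => ?_) (by norm_num)
    (fun y hy => C6 hy) hx
  have h2 : HasDerivAt (fun y:ℝ => y - y^3/6 + y^5/120 - y^7/5040)
      (1 - y^2/2 + y^4/24 - y^6/720) y := by
    have := ((((hasDerivAt_id y).sub ((hasDerivAt_pow 3 y).div_const 6)).add
      ((hasDerivAt_pow 5 y).div_const 120)).sub ((hasDerivAt_pow 7 y).div_const 5040))
    exact this.congr_deriv (by push_cast; ring)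
  exact (Real.hasDerivAt_sin y).sub h2

lemma C8 {x : ℝ} (hx : 0 ≤ x) :
    0 ≤ (1 - x^2/2 + x^4/24 - x^6/720 + x^8/40320) - cos x := by
  refine ladder (f := fun y => (1 - y^2/2 + y^4/24 - y^6/720 + y^8/40320) - cos y)
    (g := fun y => sin y - (y - y^3/6 + y^5/120 - y^7/5040)) (fun y => ?_) (by norm_num)
    (fun y hy => S7 hy) hx
  have h2 : HasDerivAt (fun y:ℝ => 1 - y^2/2 + y^4/24 - y^6/720 + y^8/40320)
      (-y + y^3/6 - y^5/120 + y^7/5040) y := by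
    have := (((((hasDerivAt_const y (1:ℝ)).sub ((hasDerivAt_pow 2 y).div_const 2)).add
      ((hasDerivAt_pow 4 y).div_const 24)).sub ((hasDerivAt_pow 6 y).div_const 720)).add
      ((hasDerivAt_pow 8 y).div_const 40320))
    exact this.congr_deriv (by push_cast; ring)
  have := h2.sub (Real.hasDerivAt_cos y)
  exact this.congr_deriv (by ring)

lemma S9 {x : ℝ} (hx : 0 ≤ x) :
    0 ≤ (x - x^3/6 + x^5/120 - x^7/5040 + x^9/362880) - sin x := by
  refine ladder (f := fun y => (y - y^3/6 + y^5/120 - y^7/5040 + y^9/362880) - sin y)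
    (g := fun y => (1 - y^2/2 + y^4/24 - y^6/720 + y^8/40320) - cos y) (fun y => ?_)
    (by norm_num) (fun y hy => C8 hy) hx
  have h2 : HasDerivAt (fun y:ℝ => y - y^3/6 + y^5/120 - y^7/5040 + y^9/362880)
      (1 - y^2/2 + y^4/24 - y^6/720 + y^8/40320) y := by
    have := (((((hasDerivAt_id y).sub ((hasDerivAt_pow 3 y).div_const 6)).add
      ((hasDerivAt_pow 5 y).div_const 120)).sub ((hasDerivAt_pow 7 y).div_const 5040)).add
      ((hasDerivAt_pow 9 y).div_const 362880))
    exact this.congr_deriv (by push_cast; ring)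
  exact h2.sub (Real.hasDerivAt_sin y)

noncomputable def Qbig (t : ℝ) : ℝ :=
  (64/945 : ℝ) + (-(4367/75600) : ℝ) * t + (1843/75600 : ℝ) * t^2 + (-(50479/7938000) : ℝ) * t^3 + (127/117600 : ℝ) * t^4 + (-(1829411/17146080000) : ℝ) * t^5 + (220163/432081216000 : ℝ) * t^6 + (9174881/4800902400000 : ℝ) * t^7 + (-(33779797/86416243200000) : ℝ) * t^8 + (1129617547/23332385664000000 : ℝ) * t^9 + (-(1419586843/326653399296000000) : ℝ) * t^10 + (5877195221/19599203957760000000 : ℝ) * t^11 + (-(1932697183/117595223746560000000) : ℝ) * t^12 + (6948251521/9407617899724800000000 : ℝ) * t^13 + (-(3908053/139372117032960000000) : ℝ) * t^14 + (9924367/10840053547008000000000 : ℝ) * t^15 + (-(15138041/585362891538432000000000) : ℝ) * t^16 + (30571/48780240961536000000000 : ℝ) * t^17 + (-(830971/64536258792112128000000000) : ℝ) * t^18 + (25303/114731126741532672000000000 : ℝ) * t^19 + (-(6347/2065160281347588096000000000) : ℝ) * t^20 + (971/28912243938866233344000000000 : ℝ) * t^21 + (-(47/173473463633197400064000000000) :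 ℝ) * t^22 + (1/693893854532789600256000000000 : ℝ) * t^23 + (-(1/262291877013394468896768000000000) : ℝ) * t^24

lemma R5pos {t : ℝ} (ht : 0 ≤ t) (hB : t ≤ 2468/1000) :
    (6/10000 : ℝ) < (64/945 : ℝ) + (-(4367/75600) : ℝ) * t + (1843/75600 : ℝ) * t^2 + (-(50479/7938000) : ℝ) * t^3 + (127/117600 : ℝ) * t^4 + (-(1829411/17146080000) : ℝ) * t^5 := by
  have hu : (0:ℝ) ≤ 2468/1000 - t := by linarith
  have h34 : (0:ℝ) ≤ (2468/1000 - t)^3 * ((235428924179/107163000000000 : ℝ) + (-(202916587/857304000000) : ℝ) * (2468/1000 - t)) := by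
    apply mul_nonneg (pow_nonneg hu 3); nlinarith
  nlinarith [pow_nonneg hu 2, pow_nonneg hu 5, h34, hu]

lemma Qpos {t : ℝ} (ht : 0 ≤ t) (hB : t ≤ 2468/1000) : 0 < Qbig t := by
  have hn8 : t^8 ≤ (2468/1000:ℝ)^8 := pow_le_pow_left₀ ht hB 8
  have hn10 : t^10 ≤ (2468/1000:ℝ)^10 := pow_le_pow_left₀ ht hB 10
  have hn12 : t^12 ≤ (2468/1000:ℝ)^12 := pow_le_pow_left₀ ht hB 12
  have hn14 : t^14 ≤ (2468/1000:ℝ)^14 := pow_le_pow_left₀ ht hB 14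
  have hn16 : t^16 ≤ (2468/1000:ℝ)^16 := pow_le_pow_left₀ ht hB 16
  have hn18 : t^18 ≤ (2468/1000:ℝ)^18 := pow_le_pow_left₀ ht hB 18
  have hn20 : t^20 ≤ (2468/1000:ℝ)^20 := pow_le_pow_left₀ ht hB 20
  have hn22 : t^22 ≤ (2468/1000:ℝ)^22 := pow_le_pow_left₀ ht hB 22
  have hn24 : t^24 ≤ (2468/1000:ℝ)^24 := pow_le_pow_left₀ ht hB 24
  have hp6 : (0:ℝ) ≤ t^6 := pow_nonneg ht 6
  have hp7 : (0:ℝ) ≤ t^7 := pow_nonneg ht 7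
  have hp9 : (0:ℝ) ≤ t^9 := pow_nonneg ht 9
  have hp11 : (0:ℝ) ≤ t^11 := pow_nonneg ht 11
  have hp13 : (0:ℝ) ≤ t^13 := pow_nonneg ht 13
  have hp15 : (0:ℝ) ≤ t^15 := pow_nonneg ht 15
  have hp17 : (0:ℝ) ≤ t^17 := pow_nonneg ht 17
  have hp19 : (0:ℝ) ≤ t^19 := pow_nonneg ht 19
  have hp21 : (0:ℝ) ≤ t^21 := pow_nonneg ht 21
  have hp23 : (0:ℝ) ≤ t^23 := pow_nonneg ht 23
  have hr := R5pos ht hB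
  rw [Qbig]
  nlinarith [hr, hn8, hn10, hn12, hn14, hn16, hn18, hn20, hn22, hn24, hp6, hp7, hp9, hp11, hp13, hp15, hp17, hp19, hp21, hp23]

lemma Qident (x : ℝ) :
    8*(x - x^3/6 + x^5/120 - x^7/5040)^9
      - x^6*(1 - x^2/2 + x^4/24 - x^6/720 + x^8/40320)
        *(x + (x - 2*x^3/3 + 2*x^5/15 - 4*x^7/315 + 2*x^9/2835))^3 = x^15 * Qbig (x^2) := by
  rw [Qbig]; ring

lemma keyK {x : ℝ} (hx : 0 < x) (hx2 : x < π/2) :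
    x^6 * cos x * (x + sin x * cos x)^3 < 8 * sin x ^ 9 := by
  have hπ : π < 3.1416 := by linarith [Real.pi_lt_d6]
  have hB : x^2 ≤ 2468/1000 := by nlinarith
  have hs : 0 < sin x := sin_pos_of_pos_of_lt_pi hx (by nlinarith [Real.pi_gt_three])
  have hc : 0 < cos x := cos_pos_of_mem_Ioo ⟨by linarith, hx2⟩
  have hSnn : 0 ≤ x - x^3/6 + x^5/120 - x^7/5040 := by nlinarith [sq_nonneg x, pow_nonneg hx.le 3, pow_nonneg hx.le 5, pow_nonneg hx.le 7, mul_le_mul_of_nonneg_left hB (pow_nonneg hx.le 5)]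
  have hSle : x - x^3/6 + x^5/120 - x^7/5040 ≤ sin x := by have := S7 hx.le; linarith
  have hCle : cos x ≤ 1 - x^2/2 + x^4/24 - x^6/720 + x^8/40320 := by
    have := C8 hx.le; linarith
  have hCpos : (0:ℝ) < 1 - x^2/2 + x^4/24 - x^6/720 + x^8/40320 := lt_of_lt_of_le hc hCle
  have hscH : sin x * cos x ≤ x - 2*x^3/3 + 2*x^5/15 - 4*x^7/315 + 2*x^9/2835 := by
    have h2 := S9 (x := 2*x) (by linarith)
    have h3 : sin (2*x) = 2 * sin x * cos x := Real.sin_two_mul x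
    nlinarith [h2, h3]
  have hxsc : 0 < x + sin x * cos x := by positivity
  have hcube : (x + sin x * cos x)^3
      ≤ (x + (x - 2*x^3/3 + 2*x^5/15 - 4*x^7/315 + 2*x^9/2835))^3 :=
    pow_le_pow_left₀ hxsc.le (by linarith) 3
  have hstep : x^6 * cos x * (x + sin x * cos x)^3
      ≤ x^6 * (1 - x^2/2 + x^4/24 - x^6/720 + x^8/40320)
        * (x + (x - 2*x^3/3 + 2*x^5/15 - 4*x^7/315 + 2*x^9/2835))^3 := by
    have h1 : x^6 * cos x * (x + sin x * cos x)^3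
        ≤ x^6 * (1 - x^2/2 + x^4/24 - x^6/720 + x^8/40320) * (x + sin x * cos x)^3 := by
      apply mul_le_mul_of_nonneg_right _ (by positivity)
      exact mul_le_mul_of_nonneg_left hCle (by positivity)
    have h2 : x^6 * (1 - x^2/2 + x^4/24 - x^6/720 + x^8/40320) * (x + sin x * cos x)^3
        ≤ x^6 * (1 - x^2/2 + x^4/24 - x^6/720 + x^8/40320)
          * (x + (x - 2*x^3/3 + 2*x^5/15 - 4*x^7/315 + 2*x^9/2835))^3 :=
      mul_le_mul_of_nonneg_left hcube (by positivity)
    linarith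
  have hpoly : x^6 * (1 - x^2/2 + x^4/24 - x^6/720 + x^8/40320)
      * (x + (x - 2*x^3/3 + 2*x^5/15 - 4*x^7/315 + 2*x^9/2835))^3
      < 8 * (x - x^3/6 + x^5/120 - x^7/5040)^9 := by
    have hq := Qpos (t := x^2) (by positivity) hB
    have hid := Qident x
    have hx15 : (0:ℝ) < x^15 := by positivity
    nlinarith [mul_pos hx15 hq, hid]
  have hS9 : (x - x^3/6 + x^5/120 - x^7/5040)^9 ≤ sin x ^ 9 := pow_le_pow_left₀ hSnn hSle 9
  calc x^6 * cos x * (x + sin x * cos x)^3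
      ≤ _ := hstep
  _ < 8 * (x - x^3/6 + x^5/120 - x^7/5040)^9 := hpoly
  _ ≤ 8 * sin x ^ 9 := by linarith

lemma mainPos {x : ℝ} (hx : 0 < x) (hx2 : x < π/2) :
    (2 * (sin x / x) + tan x / x) / 3 > (sin x / x) ^ ((2:ℝ)/3) * (tan x / x) ^ ((1:ℝ)/3) ∧
      (sin x / x) ^ ((2:ℝ)/3) * (tan x / x) ^ ((1:ℝ)/3) >
        (1/2) * ((x / sin x) ^ 2 + x / tan x) := by
  have hs : 0 < sin x := sin_pos_of_pos_of_lt_pi hx (by nlinarith [Real.pi_gt_three])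
  have hc : 0 < cos x := cos_pos_of_mem_Ioo ⟨by linarith, hx2⟩
  have hc1 : cos x < 1 := by nlinarith [sin_sq_add_cos_sq x]
  have htan : tan x = sin x / cos x := Real.tan_eq_sin_div_cos x
  set w : ℝ := cos x ^ ((1:ℝ)/3) with hw
  have hwpos : 0 < w := Real.rpow_pos_of_pos hc _
  have hw3 : w^3 = cos x := by
    rw [hw, ← Real.rpow_natCast (cos x ^ ((1:ℝ)/3)) 3, ← Real.rpow_mul hc.le]
    norm_num
  have hw1 : w < 1 := by
    rw [hw]; exact Real.rpow_lt_one hc.le hc1 (by norm_num)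
  have ha : 0 < sin x / x := by positivity
  have hb : tan x / x = (sin x / x) / cos x := by
    rw [htan]; field_simp
  have hgeom : (sin x / x) ^ ((2:ℝ)/3) * (tan x / x) ^ ((1:ℝ)/3) = (sin x / x) / w := by
    rw [hb, Real.div_rpow ha.le hc.le, ← hw, ← mul_div_assoc, ← Real.rpow_add ha]
    norm_num
  constructor
  · -- first inequality
    rw [hgeom, hb, ← hw3]
    have hfac : (2 * (sin x / x) + sin x / x / w^3) / 3 - (sin x / x) / w
        = (sin x / x) * (2*w^3 - 3*w^2 + 1) / (3 * w^3) := by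
      field_simp; ring
    have hpos : 0 < (sin x / x) * (2*w^3 - 3*w^2 + 1) / (3 * w^3) := by
      have h2 : 0 < 2*w^3 - 3*w^2 + 1 := by nlinarith [sq_nonneg (w - 1)]
      positivity
    linarith [hfac, hpos]
  · -- second inequality
    rw [hgeom]
    have hrhs : (1/2) * ((x / sin x) ^ 2 + x / tan x)
        = (x^2 + x * sin x * cos x) / (2 * sin x^2) := by
      rw [htan]; field_simp
    rw [hrhs]
    have hKey := keyK hx hx2
    have hlt : x^2 * (x + sin x * cos x) * w < 2 * sin x^3 := by
      apply lt_of_pow_lt_pow_left₀ 3 (by positivity)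
      calc (x^2 * (x + sin x * cos x) * w)^3
          = x^6 * (x + sin x * cos x)^3 * w^3 := by ring
        _ = x^6 * cos x * (x + sin x * cos x)^3 := by rw [hw3]; ring
        _ < 8 * sin x ^ 9 := hKey
        _ = (2 * sin x^3)^3 := by ring
    have hdiff : (sin x / x) / w - (x^2 + x * sin x * cos x) / (2 * sin x^2)
        = (2 * sin x^3 - x^2 * (x + sin x * cos x) * w) / (2 * x * w * sin x^2) := by
      field_simp
    have hpos : 0 < (2 * sin x^3 - x^2 * (x + sin x * cos x) * w) / (2 * x * w * sin x^2) := by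
      apply div_pos (by linarith) (by positivity)
    linarith [hdiff, hpos]

theorem stmt_7 (x : ℝ) (h1 : 0 < |x|) (h2 : |x| < π / 2) :
    (2 * (sin x / x) + tan x / x) / 3 > (sin x / x) ^ ((2 : ℝ) / 3) * (tan x / x) ^ ((1 : ℝ) / 3) ∧
      (sin x / x) ^ ((2 : ℝ) / 3) * (tan x / x) ^ ((1 : ℝ) / 3) >
        (1 / 2) * ((x / sin x) ^ 2 + x / tan x) := by
  rcases lt_or_gt_of_ne (fun h : x = 0 => by simp [h] at h1) with hneg | hpos
  · have hx : 0 < -x := by linarith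
    have hx2 : -x < π / 2 := by rwa [abs_of_neg hneg] at h2
    have := mainPos hx hx2
    simpa [Real.sin_neg, Real.tan_neg, neg_div_neg_eq] using this
  · have hx2 : x < π / 2 := by rwa [abs_of_pos hpos] at h2
    exact mainPos hpos hx2
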